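/- arXiv:2411.11842 — 2 statements merged into one kernel-verified Lean document; each statement's English description precedes it below -/
import Mathlib

section
/- Let d, α, ρ, σ ∈ ℕ and let θ = α^{2(σ−1)}·(d(σ−1)+ρ). Let G be a graph and let M = (A_1,…,A_θ; B) be a B-linear (θ,1)-model in G such that every vertex of B has neighbors in at most d of the sets A_1,…,A_θ. Then either (a) there exist indices i_1 < ⋯ < i_α in {1,…,θ} and a subpath B' of B such that (A_{i_1},…,A_{i_α}; B') is an A-aligned (α,1)-model in G, or (b) there is a B-induced (ρ,σ)-model (A''_1,…,A''_ρ; B''_1,…,B''_σ) in G with each A''_i ∈ {A_1,…,A_θ} and all B''_j contained in B. -/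
open SimpleGraph

universe u v

/-- No edge of `G` joins `X` and `Y`. -/
def NoEdges {V : Type u} (G : SimpleGraph V) (X Y : Set V) : Prop :=
  ∀ ⦃x⦄, x ∈ X → ∀ ⦃y⦄, y ∈ Y → ¬ G.Adj x y

/-- `X` and `Y` are anticomplete: disjoint with no edges between them. -/
def Anticomplete {V : Type u} (G : SimpleGraph V) (X Y : Set V) : Prop :=
  Disjoint X Y ∧ NoEdges G X Y

/-- A stable (independent) set. -/
def IsStableSet {V : Type u} (G : SimpleGraph V) (S : Set V) : Prop :=
  S.Pairwise fun x y => ¬ G.Adj x y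

/-- Some edge of `G` joins `X` and `Y`. -/
def Touches {V : Type u} (G : SimpleGraph V) (X Y : Set V) : Prop :=
  ∃ x ∈ X, ∃ y ∈ Y, G.Adj x y

/-- `P` induces a (nonempty) path in `G`. -/
def IsInducedPath {V : Type u} (G : SimpleGraph V) (P : Set V) : Prop :=
  ∃ n : ℕ, 0 < n ∧ Nonempty (G.induce P ≃g pathGraph n)

/-- A `μ`-model in `G`: pairwise disjoint connected induced subgraphs, pairwise joined. -/
def IsCompleteModel {V : Type u} (G : SimpleGraph V) {μ : ℕ} (C : Fin μ → Set V) : Prop :=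
  (∀ i, (G.induce (C i)).Connected) ∧
  (Pairwise fun i j => Disjoint (C i) (C j)) ∧
  Pairwise fun i j => Touches G (C i) (C j)

/-- All branch sets are induced paths. -/
def IsLinearFamily {V : Type u} (G : SimpleGraph V) {μ : ℕ} (C : Fin μ → Set V) : Prop :=
  ∀ i, IsInducedPath G (C i)

/-- A `(ρ,σ)`-model in `G`. -/
def IsBipModel {V : Type u} (G : SimpleGraph V) {ρ σ : ℕ}
    (A : Fin ρ → Set V) (B : Fin σ → Set V) : Prop :=
  (∀ i, (G.induce (A i)).Connected) ∧ (∀ j, (G.induce (B j)).Connected) ∧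
  (Pairwise fun i j => Disjoint (A i) (A j)) ∧
  (Pairwise fun i j => Disjoint (B i) (B j)) ∧
  (∀ i j, Disjoint (A i) (B j)) ∧
  ∀ i j, Touches G (A i) (B j)

/-- The family `A` is pairwise anticomplete. -/
def FamilyInduced {V : Type u} (G : SimpleGraph V) {ρ : ℕ} (A : Fin ρ → Set V) : Prop :=
  Pairwise fun i j => NoEdges G (A i) (A j)

/-- `H` is a minor of `G`, via a minor model. -/
def IsMinorOf {W : Type v} {V : Type u} (H : SimpleGraph W) (G : SimpleGraph V) : Prop :=
  ∃ φ : W → Set V,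
    (∀ w, (G.induce (φ w)).Connected) ∧
    (Pairwise fun w w' => Disjoint (φ w) (φ w')) ∧
    ∀ ⦃w w'⦄, H.Adj w w' → Touches G (φ w) (φ w')

/-- `H` is an induced minor of `G`. -/
def IsInducedMinorOf {W : Type v} {V : Type u} (H : SimpleGraph W) (G : SimpleGraph V) : Prop :=
  ∃ φ : W → Set V,
    (∀ w, (G.induce (φ w)).Connected) ∧
    (Pairwise fun w w' => Disjoint (φ w) (φ w')) ∧
    (∀ ⦃w w'⦄, H.Adj w w' → Touches G (φ w) (φ w')) ∧
    ∀ ⦃w w'⦄, w ≠ w' → ¬ H.Adj w w' → NoEdges G (φ w) (φ w')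

/-- `G` has a tree decomposition of width at most `k`. -/
def TreewidthAtMost {V : Type u} (G : SimpleGraph V) (k : ℕ) : Prop :=
  ∃ (ι : Type u) (T : SimpleGraph ι) (bag : ι → Set V),
    T.IsTree ∧
    (∀ x : V, ∃ i, x ∈ bag i) ∧
    (∀ ⦃x y⦄, G.Adj x y → ∃ i, x ∈ bag i ∧ y ∈ bag i) ∧
    (∀ x : V, (T.induce {i | x ∈ bag i}).Connected) ∧
    ∀ i, (bag i).Finite ∧ (bag i).ncard ≤ k + 1

/-- A subdivision model: `G` is obtained from `H` by replacing edges with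
internally disjoint paths. -/
def IsSubdivisionModel {W : Type v} {V : Type u} (H : SimpleGraph W) (G : SimpleGraph V)
    (f : W → V) (P : ∀ ⦃a b : W⦄, H.Adj a b → G.Walk (f a) (f b)) : Prop :=
  Function.Injective f ∧
  (∀ ⦃a b⦄ (h : H.Adj a b), (P h).IsPath) ∧
  (∀ ⦃a b⦄ (h : H.Adj a b), P h.symm = (P h).reverse) ∧
  (∀ ⦃a b⦄ (h : H.Adj a b) (x : V), x ∈ (P h).support → x ∈ Set.range f →
      x = f a ∨ x = f b) ∧
  (∀ ⦃a b⦄ (h : H.Adj a b) ⦃a' b'⦄ (h' : H.Adj a' b'), s(a, b) ≠ s(a', b') →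
      ∀ x, x ∈ (P h).support → x ∈ (P h').support → x ∈ Set.range f) ∧
  (∀ x : V, x ∈ Set.range f ∨ ∃ a b, ∃ h : H.Adj a b, x ∈ (P h).support) ∧
  ∀ e ∈ G.edgeSet, ∃ a b, ∃ h : H.Adj a b, e ∈ (P h).edges

/-- `G` is (isomorphic to) a subdivision of `H`. -/
def IsSubdivisionOf {W : Type v} {V : Type u} (H : SimpleGraph W) (G : SimpleGraph V) : Prop :=
  ∃ f P, IsSubdivisionModel H G f P

/-- `G` is a proper subdivision of `H`: every edge is subdivided at least once. -/
def IsProperSubdivisionOf {W : Type v} {V : Type u} (H : SimpleGraph W) (G : SimpleGraph V) : Prop :=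
  ∃ f P, IsSubdivisionModel H G f P ∧ ∀ ⦃a b⦄ (h : H.Adj a b), 2 ≤ (P h).length

/-- The `r`-by-`r` wall (hexagonal grid / brick wall). -/
def wallGraph (r : ℕ) : SimpleGraph (Fin r × Fin (2 * r)) :=
  SimpleGraph.fromRel fun p q =>
    (p.1 = q.1 ∧ p.2.val + 1 = q.2.val) ∨
    (p.2 = q.2 ∧ p.1.val + 1 = q.1.val ∧ (p.1.val + p.2.val) % 2 = 0)

/-- `R` is an induced path in `G` (as a walk). -/
def IsPathIn {V : Type u} (G : SimpleGraph V) {x y : V} (R : G.Walk x y) : Prop :=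
  R.IsPath ∧ IsInducedPath G {z | z ∈ R.support}

/-- The interior of a walk from `x` to `y`. -/
def interiorSet {V : Type u} (G : SimpleGraph V) {x y : V} (R : G.Walk x y) : Set V :=
  {z | z ∈ R.support ∧ z ≠ x ∧ z ≠ y}

/-- An `s`-constellation `(S, L)` in `G` (with `V(G) = S ∪ L`). -/
def IsConstellation {V : Type u} (G : SimpleGraph V) (S L : Set V) (s : ℕ) : Prop :=
  S ∪ L = Set.univ ∧ Disjoint S L ∧ IsInducedPath G L ∧ IsStableSet G S ∧
  S.Finite ∧ S.ncard = s ∧ ∀ x ∈ S, ∃ z ∈ L, G.Adj x z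

/-- Ample: no two vertices of `S` have a common neighbor in `L`. -/
def IsAmple {V : Type u} (G : SimpleGraph V) (S L : Set V) : Prop :=
  ∀ ⦃x⦄, x ∈ S → ∀ ⦃y⦄, y ∈ S → x ≠ y → ∀ ⦃z⦄, z ∈ L → ¬ (G.Adj x z ∧ G.Adj y z)

/-- Interrupted: an enumeration of `S` such that later vertices meet the interior of
every route between earlier vertices. -/
def IsInterrupted {V : Type u} (G : SimpleGraph V) (S L : Set V) (s : ℕ) : Prop :=
  ∃ x : Fin s → V, Function.Injective x ∧ Set.range x = S ∧
    ∀ ⦃i j k : Fin s⦄, i < j → j < k →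
      ∀ (R : G.Walk (x i) (x j)), IsPathIn G R → interiorSet G R ⊆ L →
        ∃ z ∈ interiorSet G R, G.Adj (x k) z

/-- An `(s,l)`-constellation in `G` with stable set `S` (and `V(G) = S ∪ paths`). -/
def IsSLConstellation {V : Type u} (G : SimpleGraph V) (S : Set V) (s l : ℕ) : Prop :=
  IsStableSet G S ∧ S.Finite ∧ S.ncard = s ∧
  Nat.card (G.induce Sᶜ).ConnectedComponent = l ∧
  (∀ C : (G.induce Sᶜ).ConnectedComponent, IsInducedPath G (Subtype.val '' C.supp)) ∧
  ∀ x ∈ S, ∀ C : (G.induce Sᶜ).ConnectedComponent, ∃ z ∈ Subtype.val '' C.supp, G.Adj x z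

/-- A route of the constellation: an induced path with distinct ends in `S` and
interior outside `S`. -/
def IsRoute {V : Type u} (G : SimpleGraph V) (S : Set V) {x y : V} (R : G.Walk x y) : Prop :=
  x ∈ S ∧ y ∈ S ∧ x ≠ y ∧ IsPathIn G R ∧ interiorSet G R ⊆ Sᶜ

/-- Ample `(s,l)`-constellation: no route of length at most `2`. -/
def IsSLAmple {V : Type u} (G : SimpleGraph V) (S : Set V) : Prop :=
  ∀ ⦃x y : V⦄ (R : G.Walk x y), IsRoute G S R → 2 < R.length

/-- `q`-zigzagged. -/
def IsZigzagged {V : Type u} (G : SimpleGraph V) (S : Set V) (q : ℕ) : Prop :=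
  ∃ e : V → ℕ, Set.InjOn e S ∧
    ∀ ⦃x⦄, x ∈ S → ∀ ⦃y⦄, y ∈ S → e x < e y →
      ∀ (R : G.Walk x y), IsRoute G S R →
        ({z | z ∈ S ∧ e x < e z ∧ e z < e y ∧ ¬ ∃ w ∈ R.support, G.Adj z w}).ncard < q

/-- A strong `(k,l)`-block `(B, Q)` in `G`. -/
def IsStrongBlock {V : Type u} (G : SimpleGraph V) (k l : ℕ) (B : Set V)
    (Q : (x : V) → (y : V) → Set (G.Walk x y)) : Prop :=
  B.Finite ∧ k ≤ B.ncard ∧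
  (∀ x ∈ B, ∀ y ∈ B, x ≠ y →
    (∃ s : Finset (G.Walk x y), ↑s ⊆ Q x y ∧ l ≤ s.card) ∧
    (∀ W ∈ Q x y, IsPathIn G W) ∧
    (∀ W ∈ Q x y, ∀ W' ∈ Q x y, W ≠ W' →
      ∀ z, z ∈ SimpleGraph.Walk.support W → z ∈ SimpleGraph.Walk.support W' →
        z = x ∨ z = y)) ∧
  ∀ x ∈ B, ∀ y ∈ B, x ≠ y → ∀ x' ∈ B, ∀ y' ∈ B, x' ≠ y' → s(x, y) ≠ s(x', y') →
    ∀ W ∈ Q x y, ∀ W' ∈ Q x' y',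
      ∀ z, z ∈ SimpleGraph.Walk.support W → z ∈ SimpleGraph.Walk.support W' →
        z ∈ ({x, y} ∩ {x', y'} : Set V)

/-- A `(α,1)`-model with path side `B` is `A`-aligned. -/
def AAlignedSingle {V : Type u} (G : SimpleGraph V) {α : ℕ}
    (A : Fin α → Set V) (B : Set V) : Prop :=
  ∃ (n : ℕ) (e : G.induce B ≃g pathGraph n) (l r : Fin α → ℕ),
    (∀ i, l i ≤ r i) ∧ (∀ i j, i < j → r i < l j) ∧
    ∀ i (x : B), (∃ a ∈ A i, G.Adj ↑x a) → l i ≤ (e x).val ∧ (e x).val ≤ r i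




section ES
variable {γ : Type*} [LinearOrder γ]
open Function Finset in
private theorem my_erdos_szekeres {r s n : ℕ} {f : Fin n → γ} (hn : r * s < n) (hf : Injective f) :
    (∃ t : Finset (Fin n), r < #t ∧ StrictMonoOn f ↑t) ∨
      ∃ t : Finset (Fin n), s < #t ∧ StrictAntiOn f ↑t := by
  let inc_sequences_ending_in : Fin n → Finset (Finset (Fin n)) := fun i =>
    univ.powerset.filter fun t => Finset.max t = i ∧ StrictMonoOn f ↑t
  let dec_sequences_ending_in : Fin n → Finset (Finset (Fin n)) := fun i =>
    univ.powerset.filter fun t => Finset.max t = i ∧ StrictAntiOn f ↑t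
  have inc_i : ∀ i, {i} ∈ inc_sequences_ending_in i := fun i => by
    simp [inc_sequences_ending_in, StrictMonoOn]
  have dec_i : ∀ i, {i} ∈ dec_sequences_ending_in i := fun i => by
    simp [dec_sequences_ending_in, StrictAntiOn]
  let ab' : Fin n → ℕ × ℕ := by
    intro i
    apply
      (max' ((inc_sequences_ending_in i).image card) (Nonempty.image ⟨{i}, inc_i i⟩ _),
        max' ((dec_sequences_ending_in i).image card) (Nonempty.image ⟨{i}, dec_i i⟩ _))
  generalize hab : ab' = ab
  rsuffices ⟨i, hi⟩ : ∃ i, r < (ab i).1 ∨ s < (ab i).2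
  · refine Or.imp ?_ ?_ hi
    on_goal 1 =>
      have : (ab i).1 ∈ image card (inc_sequences_ending_in i) := by
        simp only [← hab]; exact max'_mem _ (Nonempty.image ⟨{i}, inc_i i⟩ _)
    on_goal 2 =>
      have : (ab i).2 ∈ image card (dec_sequences_ending_in i) := by
        simp only [← hab]; exact max'_mem _ (Nonempty.image ⟨{i}, dec_i i⟩ _)
    all_goals
      intro hi
      rw [mem_image] at this
      obtain ⟨t, ht₁, ht₂⟩ := this
      refine ⟨t, by rwa [ht₂], ?_⟩
      rw [mem_filter] at ht₁
      apply ht₁.2.2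
  have : Injective ab := by
    simp only [← hab]
    apply Injective.of_lt_imp_ne
    intro i j k q
    injection q with q₁ q₂
    cases lt_or_gt_of_ne fun _ => ne_of_lt ‹i < j› (hf ‹f i = f j›)
    on_goal 1 =>
      apply ne_of_lt _ q₁
      have : (ab' i).1 ∈ image card (inc_sequences_ending_in i) := by exact max'_mem _ (Nonempty.image ⟨{i}, inc_i i⟩ _)
    on_goal 2 =>
      apply ne_of_lt _ q₂
      have : (ab' i).2 ∈ image card (dec_sequences_ending_in i) := by exact max'_mem _ (Nonempty.image ⟨{i}, dec_i i⟩ _)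
    all_goals
      rw [Nat.lt_iff_add_one_le]
      apply le_max'
      rw [mem_image] at this ⊢
      rcases this with ⟨t, ht₁, ht₂⟩
      rw [mem_filter] at ht₁
      have : t.max = i := by simp only [ht₁.2.1]
      refine ⟨insert j t, ?_, ?_⟩
      · rw [mem_filter]
        refine ⟨?_, ?_, ?_⟩
        · rw [mem_powerset]; apply subset_univ
        · convert max_insert (a := j) (s := t)
          rw [ht₁.2.1, max_eq_left]
          apply WithBot.coe_le_coe.mpr (le_of_lt ‹i < j›)
        simp only [StrictMonoOn, StrictAntiOn, coe_insert, Set.mem_insert_iff, mem_coe]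
        rintro x ⟨rfl | _⟩ y ⟨rfl | _⟩ _
        · apply (irrefl _ ‹j < j›).elim
        · exfalso
          apply not_le_of_gt (_root_.trans ‹i < j› ‹j < y›) (le_max_of_eq ‹y ∈ t› ‹t.max = i›)
        · first
          | apply lt_of_le_of_lt _ ‹f i < f j›
          | apply lt_of_lt_of_le ‹f j < f i› _
          rcases lt_or_eq_of_le (le_max_of_eq ‹x ∈ t› ‹t.max = i›) with (_ | rfl)
          · apply le_of_lt (ht₁.2.2 ‹x ∈ t› (mem_of_max ‹t.max = i›) ‹x < i›)
          · rfl
        · apply ht₁.2.2 ‹x ∈ t› ‹y ∈ t› ‹x < y›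
      · rw [card_insert_of_notMem, ht₂]
        intro
        apply not_le_of_gt ‹i < j› (le_max_of_eq ‹j ∈ t› ‹t.max = i›)
  by_contra! q
  let ran : Finset (ℕ × ℕ) := (range r).image Nat.succ ×ˢ (range s).image Nat.succ
  have : image ab univ ⊆ ran := by
    rintro ⟨x₁, x₂⟩
    simp only [ran, mem_image, exists_prop, mem_range, mem_univ, mem_product, true_and,
      Prod.ext_iff]
    rintro ⟨i, rfl, rfl⟩
    specialize q i
    have z : 1 ≤ (ab i).1 ∧ 1 ≤ (ab i).2 := by
      simp only [← hab]
      constructor <;>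
        · apply le_max'
          rw [mem_image]
          exact ⟨{i}, by solve_by_elim, card_singleton i⟩
    exact ⟨⟨(ab i).1 - 1, by omega⟩, (ab i).2 - 1, by omega⟩
  apply not_le_of_gt hn
  simpa [ran, Nat.succ_injective, card_image_of_injective, ‹Injective ab›] using card_le_card this

private lemma mono_subseq {k m : ℕ} (hk : 1 ≤ k) (hm : k * k ≤ m) (f : Fin m → ℕ)
    (hf : Function.Injective f) :
    (∃ t : Fin k → Fin m, StrictMono t ∧ StrictMono (f ∘ t)) ∨
    (∃ t : Fin k → Fin m, StrictMono t ∧ StrictAnti (f ∘ t)) := by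
  obtain ⟨k', rfl⟩ : ∃ k', k = k' + 1 := ⟨k - 1, by omega⟩
  have hn : k' * k' < m := by nlinarith
  rcases my_erdos_szekeres hn hf with ⟨t, htc, htm⟩ | ⟨t, htc, htm⟩
  · obtain ⟨t', ht'sub, ht'card⟩ := Finset.exists_subset_card_eq (show k' + 1 ≤ t.card by omega)
    have oi := t'.orderIsoOfFin ht'card
    refine Or.inl ⟨fun u => ↑(oi u), fun u v huv => ?_, fun u v huv => ?_⟩
    · exact_mod_cast oi.strictMono huv
    · exact htm (ht'sub (oi u).2) (ht'sub (oi v).2) (by exact_mod_cast oi.strictMono huv)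
  · obtain ⟨t', ht'sub, ht'card⟩ := Finset.exists_subset_card_eq (show k' + 1 ≤ t.card by omega)
    have oi := t'.orderIsoOfFin ht'card
    refine Or.inr ⟨fun u => ↑(oi u), fun u v huv => ?_, fun u v huv => ?_⟩
    · exact_mod_cast oi.strictMono huv
    · exact htm (ht'sub (oi u).2) (ht'sub (oi v).2) (by exact_mod_cast oi.strictMono huv)
end ES


private lemma pierce {ι : Type*} [DecidableEq ι] (lo hi : ι → ℕ) :
    ∀ (m : ℕ) (F : Finset ι), (∀ i ∈ F, lo i ≤ hi i) →
    (∃ S : Finset ι, S ⊆ F ∧ S.card = m ∧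
       ∀ i ∈ S, ∀ j ∈ S, i ≠ j → hi i < lo j ∨ hi j < lo i) ∨
    (∃ pts : Finset ℕ, pts.card < m ∧ ∀ i ∈ F, ∃ p ∈ pts, lo i ≤ p ∧ p ≤ hi i) := by
  intro m
  induction m with
  | zero =>
    intro F _
    exact Or.inl ⟨∅, Finset.empty_subset _, rfl, by simp⟩
  | succ m IH =>
    intro F hlh
    rcases F.eq_empty_or_nonempty with rfl | hne
    · exact Or.inr ⟨∅, by simp, by simp⟩
    obtain ⟨i0, hi0F, hmin⟩ := F.exists_min_image hi hne
    set p := hi i0 with hp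
    set F2 := F.filter (fun i => ¬ lo i ≤ p) with hF2
    have hF2sub : F2 ⊆ F := Finset.filter_subset _ _
    rcases IH F2 (fun i hi => hlh i (hF2sub hi)) with ⟨S, hSF2, hScard, hdisj⟩ | ⟨pts, hc, hcov⟩
    · refine Or.inl ⟨insert i0 S, ?_, ?_, ?_⟩
      · exact Finset.insert_subset hi0F (hSF2.trans hF2sub)
      · rw [Finset.card_insert_of_notMem, hScard]
        intro hmem
        have := (Finset.mem_filter.mp (hSF2 hmem)).2
        exact this (hlh i0 hi0F)
      · intro i hiS j hjS hij
        rcases Finset.mem_insert.mp hiS with rfl | hiS' <;>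
          rcases Finset.mem_insert.mp hjS with rfl | hjS'
        · exact absurd rfl hij
        · exact Or.inl (by
            have := (Finset.mem_filter.mp (hSF2 hjS')).2
            omega)
        · exact Or.inr (by
            have := (Finset.mem_filter.mp (hSF2 hiS')).2
            omega)
        · exact hdisj i hiS' j hjS' hij
    · refine Or.inr ⟨insert p pts, ?_, ?_⟩
      · have := Finset.card_insert_le p pts; omega
      · intro i hiF
        by_cases hle : lo i ≤ p
        · exact ⟨p, Finset.mem_insert_self _ _, hle, hmin i hiF⟩
        · obtain ⟨q, hq, h1, h2⟩ := hcov i (Finset.mem_filter.mpr ⟨hiF, hle⟩)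
          exact ⟨q, Finset.mem_insert_of_mem hq, h1, h2⟩


private def CoreA {θ : ℕ} (mem : Fin θ → ℕ → Prop) (α a b : ℕ) : Prop :=
  ∃ a' b', a ≤ a' ∧ a' ≤ b' ∧ b' ≤ b ∧
    ∃ g : Fin α → Fin θ, StrictMono g ∧ ∃ l r : Fin α → ℕ,
      (∀ t, a' ≤ l t ∧ l t ≤ r t ∧ r t ≤ b') ∧
      ((∀ t t', t < t' → r t < l t') ∨ (∀ t t', t < t' → r t' < l t)) ∧
      (∀ t, ∃ k, mem (g t) k ∧ l t ≤ k ∧ k ≤ r t) ∧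
      (∀ t k, mem (g t) k → a' ≤ k → k ≤ b' → l t ≤ k ∧ k ≤ r t)

private def CoreB {θ : ℕ} (mem : Fin θ → ℕ → Prop) (ρ m a b : ℕ) (F : Finset (Fin θ)) : Prop :=
  ∃ G' : Finset (Fin θ), G' ⊆ F ∧ ρ ≤ G'.card ∧
    ∃ W : Fin m → ℕ × ℕ,
      (∀ t, a ≤ (W t).1 ∧ (W t).1 ≤ (W t).2 ∧ (W t).2 ≤ b) ∧
      (∀ t t', t < t' → (W t).2 + 1 < (W t').1) ∧
      ∀ i ∈ G', ∀ t, ∃ k, mem i k ∧ (W t).1 ≤ k ∧ k ≤ (W t).2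


private lemma core {θ : ℕ} (mem : Fin θ → ℕ → Prop) [inst : ∀ i k, Decidable (mem i k)]
    (d α ρ : ℕ) (hα : 1 ≤ α) (hρ : 1 ≤ ρ)
    (hdeg : ∀ k, (Finset.univ.filter fun i => mem i k).card ≤ d) :
    ∀ (j a b : ℕ) (F : Finset (Fin θ)),
      (∀ i ∈ F, ∃ k, mem i k ∧ a ≤ k ∧ k ≤ b) →
      α ^ (2 * j) * (d * j + ρ) ≤ F.card →
      CoreA mem α a b ∨ CoreB mem ρ (j + 1) a b F := by
  intro j
  induction j with
  | zero =>
    intro a b F hF hcard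
    refine Or.inr ⟨F, Finset.Subset.refl _, by simpa using hcard, fun _ => (a, b), ?_, ?_, ?_⟩
    · intro t
      have hne : F.Nonempty := by
        rw [← Finset.card_pos]
        have : 1 ≤ α ^ (2*0) * (d*0+ρ) := by simp; omega
        omega
      obtain ⟨i, hiF⟩ := hne
      obtain ⟨k, _, h1, h2⟩ := hF i hiF
      show a ≤ a ∧ a ≤ b ∧ b ≤ b
      omega
    · intro t t' htt'
      have h1 : t.val < t'.val := htt'
      have h2 := t'.isLt
      omega
    · intro i hiF t
      exact hF i hiF
  | succ j IH =>
    intro a b F hF hcard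
    -- spans
    set si : Fin θ → Finset ℕ := fun i => (Finset.Icc a b).filter (fun k => mem i k) with hsi
    have hsine : ∀ i ∈ F, (si i).Nonempty := by
      intro i hiF
      obtain ⟨k, hk, h1, h2⟩ := hF i hiF
      exact ⟨k, by simp [hsi, Finset.mem_filter, Finset.mem_Icc]; exact ⟨⟨h1, h2⟩, hk⟩⟩
    classical
    set lo : Fin θ → ℕ := fun i => if h : (si i).Nonempty then (si i).min' h else 0 with hlo
    set hi : Fin θ → ℕ := fun i => if h : (si i).Nonempty then (si i).max' h else 0 with hhi
    have hlomem : ∀ i ∈ F, lo i ∈ si i := by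
      intro i hiF; simp only [hlo, dif_pos (hsine i hiF)]; exact Finset.min'_mem _ _
    have hhimem : ∀ i ∈ F, hi i ∈ si i := by
      intro i hiF; simp only [hhi, dif_pos (hsine i hiF)]; exact Finset.max'_mem _ _
    have hsimem : ∀ i k, k ∈ si i ↔ (a ≤ k ∧ k ≤ b ∧ mem i k) := by
      intro i k; simp [hsi, Finset.mem_filter, Finset.mem_Icc, and_assoc]
    have hlole : ∀ i ∈ F, ∀ k ∈ si i, lo i ≤ k := by
      intro i hiF k hk; simp only [hlo, dif_pos (hsine i hiF)]; exact Finset.min'_le _ _ hk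
    have hhile : ∀ i ∈ F, ∀ k ∈ si i, k ≤ hi i := by
      intro i hiF k hk; simp only [hhi, dif_pos (hsine i hiF)]; exact Finset.le_max' _ _ hk
    have hlohi : ∀ i ∈ F, lo i ≤ hi i := fun i hiF => hlole i hiF _ (hhimem i hiF)
    rcases pierce lo hi (α * α) F hlohi with ⟨S, hSF, hScard, hdisj⟩ | ⟨pts, hptsc, hcov⟩
    · -- outcome A
      left
      set es := S.orderIsoOfFin hScard with hes
      have hesS : ∀ u, (es u : Fin θ) ∈ S := fun u => (es u).2
      set f : Fin (α * α) → ℕ := fun u => lo ((es u : Fin θ)) with hf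
      have hfinj : Function.Injective f := by
        intro u v huv
        by_contra hne
        have h1 : (es u : Fin θ) ≠ (es v : Fin θ) := by
          intro h
          exact hne (es.injective (Subtype.ext h))
        rcases hdisj _ (hesS u) _ (hesS v) h1 with h | h
        · have := hlohi _ (hSF (hesS u)); simp only [hf] at huv; omega
        · have := hlohi _ (hSF (hesS v)); simp only [hf] at huv; omega
      rcases mono_subseq hα (le_refl _) f hfinj with ⟨t, htm, hftm⟩ | ⟨t, htm, hfta⟩
      all_goals {
        refine ⟨a, b, le_refl a, ?_, le_refl b, fun u => (es (t u) : Fin θ), ?_, 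
          fun u => lo ((es (t u) : Fin θ)), fun u => hi ((es (t u) : Fin θ)), ?_, ?_, ?_, ?_⟩
        · -- a ≤ b
          have hmem := hlomem _ (hSF (hesS (t ⟨0, by omega⟩)))
          rw [hsimem] at hmem
          omega
        · intro u v huv
          exact_mod_cast es.strictMono (htm huv)
        · intro u
          have h1 := hlomem _ (hSF (hesS (t u)))
          have h2 := hhimem _ (hSF (hesS (t u)))
          rw [hsimem] at h1 h2
          have h3 := hlohi _ (hSF (hesS (t u)))
          exact ⟨h1.1, h3, h2.2.1⟩
        · -- ordering
          first
          | (refine Or.inl (fun u v huv => ?_)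
             have hlt : f (t u) < f (t v) := hftm huv
             have h1 : (es (t u) : Fin θ) ≠ (es (t v) : Fin θ) := by
               intro h; simp only [hf] at hlt; rw [h] at hlt; omega
             rcases hdisj _ (hesS (t u)) _ (hesS (t v)) h1 with h | h
             · exact h
             · exfalso
               have := hlohi _ (hSF (hesS (t v)))
               simp only [hf] at hlt; omega)
          | (refine Or.inr (fun u v huv => ?_)
             have hlt : f (t v) < f (t u) := hfta huv
             have h1 : (es (t v) : Fin θ) ≠ (es (t u) : Fin θ) := by
               intro h; simp only [hf] at hlt; rw [h] at hlt; omega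
             rcases hdisj _ (hesS (t v)) _ (hesS (t u)) h1 with h | h
             · exact h
             · exfalso
               have := hlohi _ (hSF (hesS (t u)))
               simp only [hf] at hlt; omega)
        · intro u
          have h1 := hlomem _ (hSF (hesS (t u)))
          rw [hsimem] at h1
          exact ⟨lo _, h1.2.2, le_refl _, hlohi _ (hSF (hesS (t u)))⟩
        · intro u k hk h1 h2
          have hks : k ∈ si ((es (t u) : Fin θ)) := by rw [hsimem]; exact ⟨h1, h2, hk⟩
          exact ⟨hlole _ (hSF (hesS (t u))) _ hks, hhile _ (hSF (hesS (t u))) _ hks⟩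
      }
    · -- piercing: pigeonhole
      set C : ℕ → Finset (Fin θ) := fun p => F.filter (fun i => lo i ≤ p ∧ p ≤ hi i) with hC
      have hFne : F.Nonempty := by
        rw [← Finset.card_pos]
        have h1 : 1 ≤ α ^ (2*(j+1)) := Nat.one_le_pow _ _ (by omega)
        have h5 : 1*1 ≤ α ^ (2*(j+1)) * (d*(j+1)+ρ) := Nat.mul_le_mul h1 (by omega)
        omega
      have hptsne : pts.Nonempty := by
        rcases pts.eq_empty_or_nonempty with rfl | h
        · obtain ⟨i, hiF⟩ := hFne
          obtain ⟨p, hp, _⟩ := hcov i hiF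
          exact absurd hp (by simp)
        · exact h
      obtain ⟨p, hppts, hpmax⟩ := pts.exists_max_image (fun p => (C p).card) hptsne
      have hsub : F ⊆ pts.biUnion C := by
        intro i hiF
        obtain ⟨q, hq, h1, h2⟩ := hcov i hiF
        exact Finset.mem_biUnion.mpr ⟨q, hq, Finset.mem_filter.mpr ⟨hiF, h1, h2⟩⟩
      have hFle : F.card ≤ pts.card * (C p).card := by
        calc F.card ≤ (pts.biUnion C).card := Finset.card_le_card hsub
        _ ≤ pts.card * (C p).card := Finset.card_biUnion_le_card_mul _ _ _ (fun q hq => hpmax q hq)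
      have hcmax : α ^ (2 * j) * (d * (j+1) + ρ) ≤ (C p).card := by
        have h2 : α * α * (α ^ (2*j) * (d*(j+1)+ρ)) = α ^ (2*(j+1)) * (d*(j+1)+ρ) := by ring
        have h3 : α ^ (2*(j+1)) * (d*(j+1)+ρ) ≤ pts.card * (C p).card := le_trans hcard hFle
        have h4 : pts.card * (C p).card < (α * α) * (C p).card ∨ (C p).card = 0 := by
          rcases Nat.eq_zero_or_pos (C p).card with h | h
          · exact Or.inr h
          · exact Or.inl (Nat.mul_lt_mul_of_lt_of_le hptsc (le_refl _) h)
        rcases h4 with h4 | h4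
        · have h5 : α * α * (α ^ (2*j) * (d*(j+1)+ρ)) < α * α * (C p).card := by omega
          exact le_of_lt (Nat.lt_of_mul_lt_mul_left h5)
        · exfalso
          rw [h4, Nat.mul_zero] at h3
          have h1 : 1 ≤ α ^ (2*(j+1)) := Nat.one_le_pow _ _ (by omega)
          have h5 : 1*1 ≤ α ^ (2*(j+1)) * (d*(j+1)+ρ) := Nat.mul_le_mul h1 (by omega)
          omega
      set D : Finset (Fin θ) := (C p).filter (fun i => mem i p) with hD
      have hDd : D.card ≤ d := by
        calc D.card ≤ (Finset.univ.filter fun i => mem i p).card := by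
              apply Finset.card_le_card
              intro i hiD
              simp only [hD, Finset.mem_filter] at hiD ⊢
              exact ⟨Finset.mem_univ _, hiD.2⟩
        _ ≤ d := hdeg p
      set C' : Finset (Fin θ) := (C p) \ D with hC'
      have hDsub : D ⊆ C p := Finset.filter_subset _ _
      have hC'card : α ^ (2*j) * (d*j + ρ) ≤ C'.card := by
        have h1 : C'.card = (C p).card - D.card := Finset.card_sdiff_of_subset hDsub
        have h2 : α ^ (2*j) * (d*(j+1)+ρ) = α ^ (2*j) * (d*j+ρ) + α ^ (2*j) * d := by ring
        have h3 : 1 ≤ α ^ (2*j) := Nat.one_le_pow _ _ (by omega)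
        have h4 : d ≤ α ^ (2*j) * d := Nat.le_mul_of_pos_left _ (by omega)
        omega
      have hC'sub : C' ⊆ F := (Finset.sdiff_subset).trans (Finset.filter_subset _ _)
      have hC'mem : ∀ i ∈ C', lo i ≤ p ∧ p ≤ hi i ∧ ¬ mem i p := by
        intro i hiC'
        have h1 := Finset.mem_sdiff.mp hiC'
        have h2 := Finset.mem_filter.mp h1.1
        refine ⟨h2.2.1, h2.2.2, ?_⟩
        intro hmem
        exact h1.2 (Finset.mem_filter.mpr ⟨h1.1, hmem⟩)
      have hC'lo : ∀ i ∈ C', a ≤ lo i ∧ lo i < p ∧ mem i (lo i) := by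
        intro i hiC'
        obtain ⟨h1, h2, h3⟩ := hC'mem i hiC'
        have h4 := hlomem i (hC'sub hiC')
        rw [hsimem] at h4
        have h5 : lo i ≠ p := fun h => h3 (h ▸ h4.2.2)
        exact ⟨h4.1, by omega, h4.2.2⟩
      have hC'hi : ∀ i ∈ C', p < hi i ∧ hi i ≤ b ∧ mem i (hi i) := by
        intro i hiC'
        obtain ⟨h1, h2, h3⟩ := hC'mem i hiC'
        have h4 := hhimem i (hC'sub hiC')
        rw [hsimem] at h4
        have h5 : hi i ≠ p := fun h => h3 (h ▸ h4.2.2)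
        exact ⟨by omega, h4.2.1, h4.2.2⟩
      have hC'ne : C'.Nonempty := by
        rw [← Finset.card_pos]
        have h3 : 1 ≤ α ^ (2*j) := Nat.one_le_pow _ _ (by omega)
        have h5 : 1*1 ≤ α ^ (2*j) * (d*j+ρ) := Nat.mul_le_mul h3 (by omega)
        omega
      obtain ⟨i0, hi0⟩ := hC'ne
      have hap : a < p := by
        have := hC'lo i0 hi0; omega
      have hpb : p < b := by
        have := hC'hi i0 hi0; omega
      have hIH := IH (p+1) b C' (fun i hiC' => by
        obtain ⟨h1, h2, h3⟩ := hC'hi i hiC'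
        exact ⟨hi i, h3, by omega, h2⟩) hC'card
      rcases hIH with hA | hB
      · -- CoreA widen
        left
        obtain ⟨a', b', h1, h2, h3, rest⟩ := hA
        exact ⟨a', b', by omega, h2, h3, rest⟩
      · -- CoreB: prepend window
        right
        obtain ⟨G', hG'sub, hG'card, W, hWb, hWgap, hWtouch⟩ := hB
        refine ⟨G', hG'sub.trans hC'sub, hG'card,
          fun t => if t.val = 0 then (a, p-1) else W ⟨t.val - 1, by omega⟩, ?_, ?_, ?_⟩
        · intro t
          by_cases ht : t.val = 0
          · beta_reduce
            rw [if_pos ht]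
            show a ≤ a ∧ a ≤ p - 1 ∧ p - 1 ≤ b
            omega
          · beta_reduce
            rw [if_neg ht]
            have h6 := hWb ⟨t.val - 1, by omega⟩
            exact ⟨(show a ≤ p + 1 by omega).trans h6.1, h6.2.1, h6.2.2⟩
        · intro t t' htt'
          have hvlt : t.val < t'.val := htt'
          by_cases ht : t.val = 0
          · by_cases ht' : t'.val = 0
            · omega
            · beta_reduce
              rw [if_pos ht, if_neg ht']
              show p - 1 + 1 < _
              exact lt_of_lt_of_le (by omega) (hWb ⟨t'.val - 1, by omega⟩).1
          · have ht' : t'.val ≠ 0 := by omega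
            beta_reduce
            rw [if_neg ht, if_neg ht']
            exact hWgap ⟨t.val - 1, by omega⟩ ⟨t'.val - 1, by omega⟩ (by
              show t.val - 1 < t'.val - 1
              omega)
        · intro i hiG' t
          by_cases ht : t.val = 0
          · beta_reduce
            rw [if_pos ht]
            obtain ⟨h1, h2, h3⟩ := hC'lo i (hG'sub hiG')
            exact ⟨lo i, h3, h1, show lo i ≤ p - 1 by omega⟩
          · beta_reduce
            rw [if_neg ht]
            exact hWtouch i hiG' ⟨t.val - 1, by omega⟩


section GraphSide
variable {V : Type u} {G : SimpleGraph V} {B : Set V} {n : ℕ}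

open Classical in
private noncomputable def posV (e : G.induce B ≃g pathGraph n) (v : V) : ℕ :=
  if hv : v ∈ B then (e ⟨v, hv⟩).val else n

private lemma posV_mem (e : G.induce B ≃g pathGraph n) {v : V} (hv : v ∈ B) :
    posV e v = (e ⟨v, hv⟩).val := by
  simp only [posV, dif_pos hv]

private lemma posV_lt (e : G.induce B ≃g pathGraph n) {v : V} (hv : v ∈ B) :
    posV e v < n := by rw [posV_mem e hv]; exact (e ⟨v, hv⟩).isLt

private lemma posV_symm_apply (e : G.induce B ≃g pathGraph n) (q : Fin n) :
    posV e ↑(e.symm q) = q.val := by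
  have hm : ↑(e.symm q) ∈ B := (e.symm q).2
  rw [posV_mem e hm]
  have h2 : (⟨↑(e.symm q), hm⟩ : B) = e.symm q := Subtype.ext rfl
  rw [h2]
  exact congrArg Fin.val (e.apply_symm_apply q)

private lemma adj_iff_posV (e : G.induce B ≃g pathGraph n) {u v : V} (hu : u ∈ B) (hv : v ∈ B) :
    G.Adj u v ↔ (posV e u + 1 = posV e v ∨ posV e v + 1 = posV e u) := by
  have h1 : G.Adj u v ↔ (G.induce B).Adj ⟨u, hu⟩ ⟨v, hv⟩ := by
    simp only [comap_adj, Function.Embedding.coe_subtype]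
  rw [h1, ← e.map_rel_iff, pathGraph_adj, posV_mem e hu, posV_mem e hv]

private def Bset (e : G.induce B ≃g pathGraph n) (a b : ℕ) : Set V :=
  {v | v ∈ B ∧ a ≤ posV e v ∧ posV e v ≤ b}

private lemma Bset_subset (e : G.induce B ≃g pathGraph n) (a b : ℕ) : Bset e a b ⊆ B :=
  fun _ hv => hv.1

private lemma symm_mem_Bset (e : G.induce B ≃g pathGraph n) {a b k : ℕ} (hk : k < n)
    (h1 : a ≤ k) (h2 : k ≤ b) : ↑(e.symm ⟨k, hk⟩) ∈ Bset e a b := by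
  refine ⟨(e.symm ⟨k, hk⟩).2, ?_, ?_⟩ <;> rw [posV_symm_apply] <;> assumption

set_option maxHeartbeats 1000000 in
private noncomputable def intervalIso (e : G.induce B ≃g pathGraph n) (a b : ℕ) (hab : a ≤ b) (hbn : b < n) :
    G.induce (Bset e a b) ≃g pathGraph (b - a + 1) :=
  { toFun := fun x => ⟨posV e x.1 - a, by
      obtain ⟨h1, h2, h3⟩ := x.2; omega⟩
    invFun := fun k => ⟨↑(e.symm ⟨a + k.1, by have := k.isLt; omega⟩),
      symm_mem_Bset e (by have := k.isLt; omega) (by omega) (by have := k.isLt; omega)⟩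
    left_inv := by
      rintro ⟨v, hv, h1, h2⟩
      apply Subtype.ext
      have key : ∀ (h : a + (posV e v - a) < n), ↑(e.symm ⟨a + (posV e v - a), h⟩) = v := by
        intro h
        have hq : (⟨a + (posV e v - a), h⟩ : Fin n) = e ⟨v, hv⟩ := by
          apply Fin.ext
          show a + (posV e v - a) = _
          rw [posV_mem e hv] at h1 ⊢
          omega
        rw [hq, e.symm_apply_apply]
      exact key _
    right_inv := by
      intro k
      apply Fin.ext
      have key : ∀ (h : a + k.val < n), posV e ↑(e.symm ⟨a + k.val, h⟩) - a = k.val := by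
        intro h
        rw [posV_symm_apply]
        show a + k.val - a = k.val
        omega
      exact key _
    map_rel_iff' := by
      rintro ⟨u, hu, hu1, hu2⟩ ⟨v, hv, hv1, hv2⟩
      show (pathGraph _).Adj _ _ ↔ G.Adj u v
      rw [pathGraph_adj, adj_iff_posV e hu hv]
      show (posV e u - a + 1 = posV e v - a ∨ posV e v - a + 1 = posV e u - a) ↔ _
      omega }

private lemma intervalIso_apply (e : G.induce B ≃g pathGraph n) (a b : ℕ) (hab : a ≤ b)
    (hbn : b < n) (x : ↥(Bset e a b)) :
    ((intervalIso e a b hab hbn) x).val = posV e x.1 - a := rfl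

private lemma Bset_connected (e : G.induce B ≃g pathGraph n) (a b : ℕ) (hab : a ≤ b)
    (hbn : b < n) : (G.induce (Bset e a b)).Connected := by
  rw [(intervalIso e a b hab hbn).connected_iff]
  exact pathGraph_connected (b - a)

private def pathRev (m : ℕ) : pathGraph m ≃g pathGraph m :=
  { Fin.revPerm with
    map_rel_iff' := by
      intro u v
      show (pathGraph m).Adj u.rev v.rev ↔ _
      rw [pathGraph_adj, pathGraph_adj, Fin.val_rev, Fin.val_rev]
      have := u.isLt
      have := v.isLt
      omega }

private lemma pathRev_apply (m : ℕ) (q : Fin m) : ((pathRev m) q).val = m - 1 - q.val := by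
  show (Fin.rev q).val = _
  rw [Fin.val_rev]
  omega

private lemma symm_posV (e : G.induce B ≃g pathGraph n) {v : V} (hv : v ∈ B)
    (h : posV e v < n) : ↑(e.symm ⟨posV e v, h⟩) = v := by
  have hq : (⟨posV e v, h⟩ : Fin n) = e ⟨v, hv⟩ := Fin.ext (posV_mem e hv)
  rw [hq, e.symm_apply_apply]

private lemma Bset_disjoint (e : G.induce B ≃g pathGraph n) {a1 b1 a2 b2 : ℕ}
    (h : b1 < a2 ∨ b2 < a1) : Disjoint (Bset e a1 b1) (Bset e a2 b2) :=
  Set.disjoint_left.mpr (by rintro v ⟨_, h1, h2⟩ ⟨_, h3, h4⟩; omega)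

private lemma Bset_noedges (e : G.induce B ≃g pathGraph n) {a1 b1 a2 b2 : ℕ}
    (h : b1 + 1 < a2 ∨ b2 + 1 < a1) : NoEdges G (Bset e a1 b1) (Bset e a2 b2) := by
  intro x hx y hy hadj
  rw [adj_iff_posV e hx.1 hy.1] at hadj
  obtain ⟨-, hx1, hx2⟩ := hx
  obtain ⟨-, hy1, hy2⟩ := hy
  omega

end GraphSide


theorem stmt_13 {V : Type u} [Fintype V] (G : SimpleGraph V) (d α ρ σ : ℕ)
    (hd : 1 ≤ d) (hα : 1 ≤ α) (hρ : 1 ≤ ρ) (hσ : 1 ≤ σ)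
    (θ : ℕ) (hθ : θ = α ^ (2 * (σ - 1)) * (d * (σ - 1) + ρ))
    (A : Fin θ → Set V) (B : Set V)
    (hM : IsBipModel G A (fun _ : Fin 1 => B))
    (hBlin : IsInducedPath G B)
    (hdeg : ∀ z ∈ B, ({i : Fin θ | ∃ u ∈ A i, G.Adj z u}).ncard ≤ d) :
    (∃ g : Fin α → Fin θ, StrictMono g ∧
      ∃ B' : Set V, B' ⊆ B ∧ IsInducedPath G B' ∧
        IsBipModel G (fun k => A (g k)) (fun _ : Fin 1 => B') ∧
        AAlignedSingle G (fun k => A (g k)) B') ∨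
    ∃ (g : Fin ρ → Fin θ) (Bm : Fin σ → Set V),
      IsBipModel G (fun i => A (g i)) Bm ∧ FamilyInduced G Bm ∧
      ∀ j, Bm j ⊆ B := by 
  classical
  obtain ⟨σ', rfl⟩ : ∃ s', σ = s' + 1 := ⟨σ - 1, by omega⟩
  have hθ' : θ = α ^ (2 * σ') * (d * σ' + ρ) := by simpa using hθ
  obtain ⟨n, hn0, ⟨e⟩⟩ := hBlin
  obtain ⟨hAconn, hBconn, hApair, hBpair, hABdisj, hABtouch⟩ := hM
  set mem : Fin θ → ℕ → Prop :=
    fun i k => ∃ h : k < n, ∃ u ∈ A i, G.Adj ↑(e.symm ⟨k, h⟩) u with hmemdef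
  have hdeg' : ∀ k, ((Finset.univ : Finset (Fin θ)).filter fun i => mem i k).card ≤ d := by
    intro k
    by_cases hk : k < n
    · have hz : ↑(e.symm ⟨k, hk⟩) ∈ B := (e.symm ⟨k, hk⟩).2
      have h1 : (((Finset.univ : Finset (Fin θ)).filter fun i => mem i k) : Set (Fin θ))
          = {i : Fin θ | ∃ u ∈ A i, G.Adj (↑(e.symm ⟨k, hk⟩)) u} := by
        ext i
        simp only [Finset.coe_filter, Finset.mem_univ, true_and, Set.mem_setOf_eq, hmemdef]
        constructor
        · rintro ⟨h, hrest⟩; exact hrest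
        · intro h; exact ⟨hk, h⟩
      calc ((Finset.univ : Finset (Fin θ)).filter fun i => mem i k).card
          = (((Finset.univ : Finset (Fin θ)).filter fun i => mem i k) : Set (Fin θ)).ncard :=
            (Set.ncard_coe_finset _).symm
        _ = ({i : Fin θ | ∃ u ∈ A i, G.Adj (↑(e.symm ⟨k, hk⟩)) u}).ncard := by rw [h1]
        _ ≤ d := hdeg _ hz
    · have h1 : ((Finset.univ : Finset (Fin θ)).filter fun i => mem i k) = ∅ := by
        rw [Finset.filter_eq_empty_iff]
        intro i _ hm
        obtain ⟨h, -⟩ := hm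
        exact hk h
      rw [h1]
      simp
  have hF : ∀ i ∈ (Finset.univ : Finset (Fin θ)), ∃ k, mem i k ∧ 0 ≤ k ∧ k ≤ n - 1 := by
    intro i _
    obtain ⟨u, hu, y, hy, hadj⟩ := hABtouch i 0
    have key : ∀ h : ((e ⟨y, hy⟩).val < n), G.Adj ↑(e.symm ⟨(e ⟨y, hy⟩).val, h⟩) u := by
      intro h
      have h2 : (⟨(e ⟨y, hy⟩).val, h⟩ : Fin n) = e ⟨y, hy⟩ := Fin.ext rfl
      rw [h2, e.symm_apply_apply]
      exact hadj.symm
    refine ⟨(e ⟨y, hy⟩).val, ⟨(e ⟨y, hy⟩).isLt, u, hu, key _⟩, by omega, ?_⟩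
    have := (e ⟨y, hy⟩).isLt
    omega
  have hcard : α ^ (2 * σ') * (d * σ' + ρ) ≤ (Finset.univ : Finset (Fin θ)).card := by
    rw [Finset.card_univ, Fintype.card_fin]
    exact hθ'.ge
  have htouchB : ∀ (i : Fin θ) (k : ℕ), mem i k → ∀ a b : ℕ, a ≤ k → k ≤ b →
      Touches G (A i) (Bset e a b) := by
    intro i k hk a b h1 h2
    obtain ⟨hkn, u, hu, hadj⟩ := hk
    exact ⟨u, hu, ↑(e.symm ⟨k, hkn⟩), symm_mem_Bset e hkn h1 h2, hadj.symm⟩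
  have hmemposV : ∀ (i : Fin θ) (x : V), x ∈ B → (∃ u ∈ A i, G.Adj x u) → mem i (posV e x) := by
    rintro i x hx ⟨u, hu, hadj⟩
    refine ⟨posV_lt e hx, u, hu, ?_⟩
    rw [symm_posV e hx]
    exact hadj
  rcases core mem d α ρ hα hρ hdeg' σ' 0 (n - 1) Finset.univ hF hcard with hA | hB
  · obtain ⟨a', b', _, hab, hb1, g, hg, l, r, hbound, hord, htouch, halign⟩ := hA
    have hbn : b' < n := by omega
    left
    refine ⟨g, hg, Bset e a' b', Bset_subset e a' b',
      ⟨b' - a' + 1, by omega, ⟨intervalIso e a' b' hab hbn⟩⟩, ⟨?_, ?_, ?_, ?_, ?_, ?_⟩, ?_⟩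
    · exact fun k => hAconn (g k)
    · exact fun _ => Bset_connected e a' b' hab hbn
    · exact fun i j hij => hApair (fun h => hij (hg.injective h))
    · intro i j hij
      exact absurd (Fin.ext (by have := i.isLt; have := j.isLt; omega : i.val = j.val)) hij
    · intro i j
      exact Disjoint.mono_right (Bset_subset e a' b') (hABdisj (g i) 0)
    · intro i j
      obtain ⟨k, hk, h1, h2⟩ := htouch i
      exact htouchB (g i) k hk a' b' ((hbound i).1.trans h1) (h2.trans (hbound i).2.2)
    · rcases hord with hinc | hdec
      · refine ⟨b' - a' + 1, intervalIso e a' b' hab hbn,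
          fun t => l t - a', fun t => r t - a', ?_, ?_, ?_⟩
        · intro t; beta_reduce; have := hbound t; omega
        · intro t t' htt'
          beta_reduce
          have h1 := hbound t; have h2 := hbound t'; have := hinc t t' htt'; omega
        · intro t x hx
          have hm := hmemposV (g t) ↑x x.2.1 hx
          have hal := halign t (posV e ↑x) hm x.2.2.1 x.2.2.2
          beta_reduce
          rw [intervalIso_apply]
          have := hbound t
          omega
      · refine ⟨b' - a' + 1, (intervalIso e a' b' hab hbn).trans (pathRev (b' - a' + 1)),
          fun t => b' - r t, fun t => b' - l t, ?_, ?_, ?_⟩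
        · intro t; beta_reduce; have := hbound t; omega
        · intro t t' htt'
          beta_reduce
          have h1 := hbound t; have h2 := hbound t'; have := hdec t t' htt'; omega
        · intro t x hx
          have hm := hmemposV (g t) ↑x x.2.1 hx
          have hal := halign t (posV e ↑x) hm x.2.2.1 x.2.2.2
          have hval : (((intervalIso e a' b' hab hbn).trans (pathRev (b' - a' + 1))) x).val
              = (b' - a' + 1) - 1 - ((intervalIso e a' b' hab hbn) x).val := by
            rw [RelIso.trans_apply]
            exact pathRev_apply _ _
          beta_reduce
          rw [hval, intervalIso_apply]
          have h1 := hbound t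
          have h2 := x.2.2.1
          have h3 := x.2.2.2
          omega
  · obtain ⟨G', hG'sub, hG'card, W, hWb, hWgap, hWtouch⟩ := hB
    right
    obtain ⟨G'', hG''sub, hG''card⟩ := Finset.exists_subset_card_eq hG'card
    have hWn : ∀ t, (W t).2 < n := fun t => by have := hWb t; omega
    set oi := G''.orderIsoOfFin hG''card with hoi
    have hinj : Function.Injective (fun t : Fin ρ => (↑(oi t) : Fin θ)) := by
      intro t t' h
      exact oi.injective (Subtype.ext h)
    refine ⟨fun t => ↑(oi t), fun t => Bset e (W t).1 (W t).2, ⟨?_, ?_, ?_, ?_, ?_, ?_⟩, ?_, ?_⟩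
    · exact fun t => hAconn _
    · exact fun t => Bset_connected e _ _ (hWb t).2.1 (hWn t)
    · exact fun t t' htt' => hApair (fun h => htt' (hinj h))
    · intro t t' htt'
      rcases lt_or_gt_of_ne htt' with h | h
      · exact Bset_disjoint e (Or.inl (by have := hWgap t t' h; omega))
      · exact Bset_disjoint e (Or.inr (by have := hWgap t' t h; omega))
    · exact fun i j => Disjoint.mono_right (Bset_subset e _ _) (hABdisj _ 0)
    · intro i j
      obtain ⟨k, hk, h1, h2⟩ := hWtouch ↑(oi i) (hG''sub (oi i).2) j
      exact htouchB _ k hk _ _ h1 h2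
    · intro t t' htt'
      rcases lt_or_gt_of_ne htt' with h | h
      · exact Bset_noedges e (Or.inl (hWgap t t' h))
      · exact Bset_noedges e (Or.inr (hWgap t' t h))
    · exact fun j => Bset_subset e _ _
end

section
/- Let c ∈ ℕ and let G be a graph containing a (c,c)-constellation as an induced subgraph. Then G contains an induced minor isomorphic to K_{c,c}, and hence the constellation has treewidth at least c. -/
open SimpleGraph

universe u v

section Infra
variable {V : Type u} {ι : Type v}

lemma connected_induce_singleton (G : SimpleGraph V) (v : V) :
    (G.induce {v}).Connected := by
  haveI : Nonempty ↥({v} : Set V) := ⟨⟨v, rfl⟩⟩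
  refine ⟨fun a b => ?_⟩
  have : a = b := Subtype.ext (a.2.trans b.2.symm)
  exact this ▸ Reachable.refl a

lemma connected_induce_insert {G : SimpleGraph V} {C : Set V} {a z : V}
    (hC : (G.induce C).Connected) (hz : z ∈ C) (ha : G.Adj a z) :
    (G.induce (insert a C)).Connected := by
  have hsub : C ⊆ insert a C := Set.subset_insert a C
  have key : ∀ u : ↥(insert a C), (G.induce (insert a C)).Reachable u ⟨a, Set.mem_insert _ _⟩ := by
    rintro ⟨u, hu⟩
    rcases hu with rfl | huC
    · exact Reachable.refl _
    · have r1 : (G.induce C).Reachable ⟨u, huC⟩ ⟨z, hz⟩ := hC.preconnected _ _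
      have r2 := r1.map (induceHomOfLE G hsub).toHom
      refine Reachable.trans ?_ (Adj.reachable (by exact ha.symm :
        (G.induce (insert a C)).Adj ⟨z, hsub hz⟩ ⟨a, Set.mem_insert _ _⟩))
      exact r2
  haveI : Nonempty ↥(insert a C) := ⟨⟨a, Set.mem_insert _ _⟩⟩
  exact ⟨fun u v => (key u).trans (key v).symm⟩

/-- iso between induced-induced subgraph and induced on the image. -/
noncomputable def induceInduceIso (G : SimpleGraph V) (X : Set V) (P : Set ↥X) :
    (G.induce X).induce P ≃g G.induce (Subtype.val '' P) where
  toEquiv := Equiv.Set.image Subtype.val P Subtype.val_injective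
  map_rel_iff' := by
    rintro ⟨⟨a, haX⟩, ha⟩ ⟨⟨b, hbX⟩, hb⟩
    simp [Equiv.Set.image, Equiv.Set.imageOfInjOn]

end Infra

section Tree
variable {ι : Type v} {T : SimpleGraph ι}

def PathClosed (T : SimpleGraph ι) (A : Set ι) : Prop :=
  ∀ ⦃x y : ι⦄ (p : T.Walk x y), p.IsPath → x ∈ A → y ∈ A → ∀ z ∈ p.support, z ∈ A

lemma pathClosed_inter {A B : Set ι} (hA : PathClosed T A) (hB : PathClosed T B) :
    PathClosed T (A ∩ B) := fun _ _ p hp hx hy z hz =>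
  ⟨hA p hp hx.1 hy.1 z hz, hB p hp hx.2 hy.2 z hz⟩

lemma pathClosed_of_connected (hac : T.IsAcyclic) {A : Set ι}
    (hA : (T.induce A).Connected) : PathClosed T A := by
  classical
  intro x y p hp hx hy z hz
  obtain ⟨w⟩ := hA.preconnected ⟨x, hx⟩ ⟨y, hy⟩
  let w' : T.Walk x y := w.map (Embedding.induce A).toHom
  have hpe : p = w'.bypass := by
    have := hac.path_unique ⟨p, hp⟩ ⟨w'.bypass, w'.bypass_isPath⟩
    exact congrArg Subtype.val this
  have hz' : z ∈ w'.support := w'.support_bypass_subset (hpe ▸ hz)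
  rw [show w'.support = _ from Walk.support_map (Embedding.induce A).toHom w] at hz'
  obtain ⟨⟨z', hz'A⟩, _, rfl⟩ := List.mem_map.mp hz'
  exact hz'A

lemma walk_endpoints_eq_of_length_zero {a b : ι} (w : T.Walk a b) (h : w.length = 0) :
    a = b := by cases w with | nil => rfl | cons _ _ => simp at h

lemma median [DecidableEq ι] : ∀ (n : ℕ) {a b c : ι} (P : T.Walk a b) (Q : T.Walk a c),
    P.IsPath → Q.IsPath → P.length ≤ n →
    ∃ m, m ∈ P.support ∧ m ∈ Q.support ∧ ∃ r : T.Walk b c, r.IsPath ∧ m ∈ r.support := by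
  intro n
  induction n with
  | zero =>
    intro a b c P Q hP hQ hlen
    have hab : a = b := walk_endpoints_eq_of_length_zero P (Nat.le_zero.mp hlen)
    subst hab
    exact ⟨a, P.start_mem_support, Q.start_mem_support, Q, hQ, Q.start_mem_support⟩
  | succ n ih =>
    intro a b c P Q hP hQ hlen
    by_cases hx : ∃ x, x ∈ P.support ∧ x ∈ Q.support ∧ x ≠ a
    · obtain ⟨x, hxP, hxQ, hxa⟩ := hx
      have hP' : (P.dropUntil x hxP).IsPath := hP.dropUntil hxP
      have hQ' : (Q.dropUntil x hxQ).IsPath := hQ.dropUntil hxQ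
      have hlenspec := congrArg Walk.length (P.take_spec hxP)
      rw [Walk.length_append] at hlenspec
      have htake : (P.takeUntil x hxP).length ≠ 0 := fun h0 =>
        hxa (walk_endpoints_eq_of_length_zero _ h0).symm
      have hlt : (P.dropUntil x hxP).length ≤ n := by omega
      obtain ⟨m, hm1, hm2, r, hr, hmr⟩ := ih (P.dropUntil x hxP) (Q.dropUntil x hxQ) hP' hQ' hlt
      exact ⟨m, P.support_dropUntil_subset hxP hm1, Q.support_dropUntil_subset hxQ hm2,
        r, hr, hmr⟩
    · push_neg at hx
      refine ⟨a, P.start_mem_support, Q.start_mem_support, P.reverse.append Q, ?_, ?_⟩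
      · rw [Walk.isPath_def, Walk.support_append]
        refine List.Nodup.append (by rw [Walk.support_reverse]; exact List.nodup_reverse.mpr hP.support_nodup)
          (hQ.support_nodup.tail) ?_
        intro z hz1 hz2
        rw [Walk.support_reverse, List.mem_reverse] at hz1
        have hzQ : z ∈ Q.support := List.mem_of_mem_tail hz2
        have hza : z = a := hx z hz1 hzQ
        subst hza
        have hnd := hQ.support_nodup
        rw [Q.support_eq_cons] at hnd
        exact (List.nodup_cons.mp hnd).1 hz2
      · exact Walk.subset_support_append_left _ _
          (by rw [Walk.support_reverse, List.mem_reverse]; exact P.start_mem_support)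

lemma helly3 (hT : T.IsTree) {A B C : Set ι} (hA : PathClosed T A) (hB : PathClosed T B)
    (hC : PathClosed T C) {p q r : ι} (hpA : p ∈ A) (hpB : p ∈ B) (hqB : q ∈ B) (hqC : q ∈ C)
    (hrA : r ∈ A) (hrC : r ∈ C) : ∃ m, m ∈ A ∧ m ∈ B ∧ m ∈ C := by
  classical
  obtain ⟨wP⟩ := hT.isConnected.preconnected r p
  obtain ⟨wQ⟩ := hT.isConnected.preconnected r q
  obtain ⟨m, hm1, hm2, w, hw, hmw⟩ := median wP.bypass.length wP.bypass wQ.bypass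
    wP.bypass_isPath wQ.bypass_isPath le_rfl
  exact ⟨m, hA wP.bypass wP.bypass_isPath hrA hpA m hm1,
    hB w hw hpB hqB m hmw, hC wQ.bypass wQ.bypass_isPath hrC hqC m hm2⟩

lemma helly {α : Type*} [DecidableEq α] (hT : T.IsTree) (s : Finset α) :
    ∀ (f : α → Set ι), (∀ a ∈ s, PathClosed T (f a)) →
    (∀ a ∈ s, ∀ b ∈ s, (f a ∩ f b).Nonempty) →
    ∃ t, ∀ a ∈ s, t ∈ f a := by
  induction s using Finset.induction_on with
  | empty => exact fun f _ _ => ⟨hT.isConnected.nonempty.some, by simp⟩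
  | @insert a s ha ih =>
    intro f hcl hint
    have hmem : ∀ b ∈ s, b ∈ insert a s := fun b hb => Finset.mem_insert_of_mem hb
    have hamem : a ∈ insert a s := Finset.mem_insert_self a s
    obtain ⟨t, ht⟩ := ih (fun b => f b ∩ f a)
      (fun b hb => pathClosed_inter (hcl b (hmem b hb)) (hcl a hamem))
      (fun b hb b' hb' => by
        obtain ⟨p, hp1, hp2⟩ := hint b (hmem b hb) b' (hmem b' hb')
        obtain ⟨q, hq1, hq2⟩ := hint b' (hmem b' hb') a hamem
        obtain ⟨r, hr1, hr2⟩ := hint b (hmem b hb) a hamem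
        obtain ⟨m, h1, h2, h3⟩ := helly3 hT (hcl b (hmem b hb)) (hcl b' (hmem b' hb'))
          (hcl a hamem) hp1 hp2 hq1 hq2 hr1 hr2
        exact ⟨m, ⟨h1, h3⟩, h2, h3⟩)
    rcases s.eq_empty_or_nonempty with rfl | ⟨b, hb⟩
    · obtain ⟨t0, ht0, _⟩ := hint a hamem a hamem
      refine ⟨t0, fun b hb => ?_⟩
      rcases Finset.mem_insert.mp hb with rfl | hb
      · exact ht0
      · simp at hb
    · refine ⟨t, fun b' hb' => ?_⟩
      rcases Finset.mem_insert.mp hb' with rfl | hb'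
      · exact (ht b hb).2
      · exact (ht b' hb').1

lemma td_subtree {W : Type u} (H : SimpleGraph W) (T : SimpleGraph ι) (bag : ι → Set W)
    (hcover : ∀ x, ∃ i, x ∈ bag i) (hedge : ∀ ⦃x y⦄, H.Adj x y → ∃ i, x ∈ bag i ∧ y ∈ bag i)
    (hvert : ∀ x, (T.induce {i | x ∈ bag i}).Connected)
    {B : Set W} (hB : (H.induce B).Connected) :
    (T.induce {i | ∃ v ∈ B, v ∈ bag i}).Connected := by
  set U : Set ι := {i | ∃ v ∈ B, v ∈ bag i} with hU
  have hsub : ∀ x, x ∈ B → {i | x ∈ bag i} ⊆ U := fun x hx i hi => ⟨x, hx, hi⟩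
  have reach_same : ∀ x (hx : x ∈ B) (t t' : ι) (ht : x ∈ bag t) (ht' : x ∈ bag t'),
      (T.induce U).Reachable ⟨t, hsub x hx ht⟩ ⟨t', hsub x hx ht'⟩ := by
    intro x hx t t' ht ht'
    exact ((hvert x).preconnected ⟨t, ht⟩ ⟨t', ht'⟩).map (induceHomOfLE T (hsub x hx)).toHom
  have key : ∀ {x y : ↥B} (w : (H.induce B).Walk x y) (t t' : ι)
      (ht : x.1 ∈ bag t) (ht' : y.1 ∈ bag t'),
      (T.induce U).Reachable ⟨t, hsub x.1 x.2 ht⟩ ⟨t', hsub y.1 y.2 ht'⟩ := by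
    intro x y w
    induction w with
    | nil => intro t t' ht ht'; exact reach_same _ (Subtype.coe_prop _) t t' ht ht'
    | @cons x₀ x₁ y hadj w ih =>
      intro t t' ht ht'
      obtain ⟨t0, h0, h1⟩ := hedge (hadj : H.Adj x₀.1 x₁.1)
      exact (reach_same x₀.1 x₀.2 t t0 ht h0).trans (ih t0 t' h1 ht')
  have hne : U.Nonempty := by
    obtain ⟨b⟩ := hB.nonempty
    obtain ⟨i, hi⟩ := hcover b.1
    exact ⟨i, b.1, b.2, hi⟩
  haveI : Nonempty ↥U := hne.to_subtype
  refine ⟨fun u v => ?_⟩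
  obtain ⟨x, hxB, hxb⟩ := u.2
  obtain ⟨y, hyB, hyb⟩ := v.2
  obtain ⟨w⟩ := hB.preconnected ⟨x, hxB⟩ ⟨y, hyB⟩
  have := key w u.1 v.1 hxb hyb
  exact this

end Tree


section Main
variable {V : Type u}

lemma connected_of_isInducedPath {G : SimpleGraph V} {P : Set V} (h : IsInducedPath G P) :
    (G.induce P).Connected := by
  obtain ⟨n, hn, ⟨e⟩⟩ := h
  rw [e.connected_iff]
  obtain ⟨m, rfl⟩ : ∃ m, n = m + 1 := ⟨n - 1, by omega⟩
  exact pathGraph_connected m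

end Main

theorem stmt_17 {V : Type u} [Fintype V] (G : SimpleGraph V) (c : ℕ) (hc : 1 ≤ c)
    (X : Set V) (S : Set ↥X) (hcon : IsSLConstellation (G.induce X) S c c) :
    IsInducedMinorOf (completeBipartiteGraph (Fin c) (Fin c)) G ∧
      ¬ TreewidthAtMost (G.induce X) (c - 1) := by
  classical
  obtain ⟨hstab, hSfin, hScard, hKcard, hpaths, hadjS⟩ := hcon
  have hSnat : Nat.card ↥S = c := by rw [Nat.card_coe_set_eq, hScard]
  let eS : ↥S ≃ Fin c := (Nat.equivFinOfCardPos (by omega)).trans (finCongr hSnat)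
  let eK : ((G.induce X).induce Sᶜ).ConnectedComponent ≃ Fin c :=
    (Nat.equivFinOfCardPos (by omega)).trans (finCongr hKcard)
  let sv : Fin c → ↥X := fun i => ((eS.symm i : ↥S) : ↥X)
  have hsvS : ∀ i, sv i ∈ S := fun i => (eS.symm i).2
  have hsv_inj : Function.Injective sv := Subtype.val_injective.comp eS.symm.injective
  let cset : Fin c → Set ↥X := fun j => Subtype.val '' (eK.symm j).supp
  have hcsC : ∀ j x, x ∈ cset j → x ∈ (Sᶜ : Set ↥X) := by
    rintro j x ⟨x', hx', rfl⟩; exact x'.2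
  have hcs_ne : ∀ j, (cset j).Nonempty := by
    intro j
    obtain ⟨v, hv⟩ := (eK.symm j).exists_rep
    exact ⟨v.1, v, (ConnectedComponent.mem_supp_iff _ _).mpr hv, rfl⟩
  have hcs_disj : ∀ {i j : Fin c}, i ≠ j → Disjoint (cset i) (cset j) := by
    intro i j hij
    rw [Set.disjoint_left]
    rintro x ⟨a, ha, rfl⟩ ⟨b, hb, hba⟩
    have hab : a = b := Subtype.ext hba.symm
    subst hab
    rw [ConnectedComponent.mem_supp_iff] at ha hb
    exact hij (eK.symm.injective (ha.symm.trans hb))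
  have hcs_conn : ∀ j, ((G.induce X).induce (cset j)).Connected :=
    fun j => connected_of_isInducedPath (hpaths (eK.symm j))
  have hadj' : ∀ i j, ∃ z ∈ cset j, (G.induce X).Adj (sv i) z :=
    fun i j => hadjS (sv i) (hsvS i) (eK.symm j)
  have hstab' : ∀ {i j : Fin c}, i ≠ j → ¬ (G.induce X).Adj (sv i) (sv j) :=
    fun {i j} hij => hstab (hsvS i) (hsvS j) (fun h => hij (hsv_inj h))
  have hs_not_cs : ∀ i j, sv i ∉ cset j := fun i j h => (hcsC j _ h) (hsvS i)
  have hcs_noadj : ∀ {i j : Fin c}, i ≠ j →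
      ∀ x ∈ cset i, ∀ y ∈ cset j, ¬ (G.induce X).Adj x y := by
    rintro i j hij x ⟨a, ha, rfl⟩ y ⟨b, hb, rfl⟩ hadj
    have hab : ((G.induce X).induce Sᶜ).Adj a b := hadj
    rw [ConnectedComponent.mem_supp_iff] at ha hb
    exact hij (eK.symm.injective
      ((ha.symm.trans (ConnectedComponent.connectedComponentMk_eq_of_adj hab)).trans hb))
  constructor
  · -- Part 1: induced minor
    refine ⟨Sum.elim (fun i => {(↑(sv i) : V)}) (fun j => Subtype.val '' cset j),
      ?_, ?_, ?_, ?_⟩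
    · rintro (i | j)
      · exact connected_induce_singleton G _
      · exact (induceInduceIso G X (cset j)).connected_iff.mp (hcs_conn j)
    · rintro (i | i) (j | j) hne
      · have hij : i ≠ j := fun h => hne (congrArg Sum.inl h)
        simp only [Sum.elim_inl, Set.disjoint_singleton]
        exact fun h => hij (hsv_inj (Subtype.val_injective h))
      · simp only [Sum.elim_inl, Sum.elim_inr, Set.disjoint_singleton_left]
        rintro ⟨y, hy, hyx⟩
        exact hs_not_cs i j ((Subtype.val_injective hyx) ▸ hy)
      · simp only [Sum.elim_inl, Sum.elim_inr, Set.disjoint_singleton_right]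
        rintro ⟨y, hy, hyx⟩
        exact hs_not_cs j i ((Subtype.val_injective hyx) ▸ hy)
      · have hij : i ≠ j := fun h => hne (congrArg Sum.inr h)
        exact Set.disjoint_image_of_injective Subtype.val_injective (hcs_disj hij)
    · rintro (i | i) (j | j) hadj
      · simp at hadj
      · obtain ⟨z, hz, hzadj⟩ := hadj' i j
        exact ⟨↑(sv i), rfl, ↑z, ⟨z, hz, rfl⟩, hzadj⟩
      · obtain ⟨z, hz, hzadj⟩ := hadj' j i
        exact ⟨↑z, ⟨z, hz, rfl⟩, ↑(sv j), rfl, hzadj.symm⟩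
      · simp at hadj
    · rintro (i | i) (j | j) hne hnadj
      · have hij : i ≠ j := fun h => hne (congrArg Sum.inl h)
        rintro x rfl y rfl hGadj
        exact hstab' hij hGadj
      · exact absurd (by simp) hnadj
      · exact absurd (by simp) hnadj
      · have hij : i ≠ j := fun h => hne (congrArg Sum.inr h)
        rintro x hx y hy hGadj
        obtain ⟨a, ha, rfl⟩ := hx
        obtain ⟨b, hb, rfl⟩ := hy
        exact hcs_noadj hij _ ha _ hb hGadj
  · -- Part 2: treewidth lower bound
    rintro ⟨ιT, T, bag, hTree, hcover, hedge, hvert, hbags⟩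
    haveI : Nonempty ↥X := ⟨sv ⟨0, by omega⟩⟩
    let idx : ℕ → Fin c := fun n => ⟨min n (c - 1), by omega⟩
    set F : ℕ → Set ↥X := fun n =>
      if n + 1 < c then insert (sv (idx n)) (cset (idx n))
      else if n = c - 1 then {sv (idx n)} else cset (idx n) with hF
    have hFeq1 : ∀ n, n + 1 < c → F n = insert (sv (idx n)) (cset (idx n)) := by
      intro n h; rw [hF]; beta_reduce; rw [if_pos h]
    have hFeq2 : ∀ n, ¬ (n + 1 < c) → n = c - 1 → F n = {sv (idx n)} := by
      intro n h h'; rw [hF]; beta_reduce; rw [if_neg h, if_pos h']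
    have hFeq3 : ∀ n, ¬ (n + 1 < c) → n ≠ c - 1 → F n = cset (idx n) := by
      intro n h h'; rw [hF]; beta_reduce; rw [if_neg h, if_neg h']
    have hFconn : ∀ n, ((G.induce X).induce (F n)).Connected := by
      intro n
      by_cases h1 : n + 1 < c
      · rw [hFeq1 n h1]
        obtain ⟨z, hz, hzadj⟩ := hadj' (idx n) (idx n)
        exact connected_induce_insert (hcs_conn _) hz hzadj
      · by_cases h2 : n = c - 1
        · rw [hFeq2 n h1 h2]
          exact connected_induce_singleton _ _
        · rw [hFeq3 n h1 h2]
          exact hcs_conn _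
    have hFne : ∀ n, (F n).Nonempty := by
      intro n
      by_cases h1 : n + 1 < c
      · rw [hFeq1 n h1]; exact ⟨_, Set.mem_insert _ _⟩
      · by_cases h2 : n = c - 1
        · rw [hFeq2 n h1 h2]; exact ⟨_, rfl⟩
        · rw [hFeq3 n h1 h2]; exact hcs_ne _
    have hFsv : ∀ n, n ≤ c → n ≠ c → ∃ i, sv i ∈ F n := by
      intro n hn hnc
      by_cases h1 : n + 1 < c
      · rw [hFeq1 n h1]; exact ⟨idx n, Set.mem_insert _ _⟩
      · have h2 : n = c - 1 := by omega
        rw [hFeq2 n h1 h2]; exact ⟨idx n, rfl⟩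
    have hFcs : ∀ n, n ≤ c → n ≠ c - 1 → ∃ j, cset j ⊆ F n := by
      intro n hn hnc
      by_cases h1 : n + 1 < c
      · rw [hFeq1 n h1]; exact ⟨idx n, Set.subset_insert _ _⟩
      · rw [hFeq3 n h1 hnc]; exact ⟨idx n, subset_rfl⟩
    have hidx : ∀ n, ((idx n : Fin c) : ℕ) = min n (c - 1) := fun n => rfl
    have hFmem : ∀ n, n ≤ c → ∀ x ∈ F n,
        (∃ i : Fin c, (i : ℕ) = min n (c - 1) ∧ x = sv i ∧ n ≠ c) ∨
        (∃ j : Fin c, (j : ℕ) = min n (c - 1) ∧ x ∈ cset j ∧ n ≠ c - 1) := by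
      intro n hn x hx
      by_cases h1 : n + 1 < c
      · rw [hFeq1 n h1] at hx
        rcases hx with rfl | hx
        · exact Or.inl ⟨idx n, hidx n, rfl, by omega⟩
        · exact Or.inr ⟨idx n, hidx n, hx, by omega⟩
      · by_cases h2 : n = c - 1
        · rw [hFeq2 n h1 h2] at hx
          exact Or.inl ⟨idx n, hidx n, hx, by omega⟩
        · rw [hFeq3 n h1 h2] at hx
          exact Or.inr ⟨idx n, hidx n, hx, by omega⟩
    have hFdisj : ∀ n m, n ≤ c → m ≤ c → n ≠ m → Disjoint (F n) (F m) := by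
      intro n m hn hm hnm
      rw [Set.disjoint_left]
      intro x hxn hxm
      rcases hFmem n hn x hxn with ⟨i, hi, hxe, hnc⟩ | ⟨i, hi, hxi, hnc⟩
      · subst hxe
        rcases hFmem m hm (sv i) hxm with ⟨j, hj, hxj, hmc⟩ | ⟨j, hj, hxj, hmc⟩
        · have hij : i = j := hsv_inj hxj
          subst hij
          omega
        · exact hs_not_cs i j hxj
      · rcases hFmem m hm x hxm with ⟨j, hj, hxj, hmc⟩ | ⟨j, hj, hxj, hmc⟩
        · subst hxj
          exact hs_not_cs j i hxi
        · by_cases hij : i = j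
          · subst hij
            omega
          · exact (Set.disjoint_left.mp (hcs_disj hij) hxi) hxj
    have hFtouch : ∀ n m, n ≤ c → m ≤ c → n ≠ m → Touches (G.induce X) (F n) (F m) := by
      have aux : ∀ (i j : Fin c) (A B : Set ↥X), sv i ∈ A → cset j ⊆ B →
          Touches (G.induce X) A B := by
        intro i j A B hA hB
        obtain ⟨z, hz, hzadj⟩ := hadj' i j
        exact ⟨sv i, hA, z, hB hz, hzadj⟩
      have aux' : ∀ (i j : Fin c) (A B : Set ↥X), sv i ∈ B → cset j ⊆ A →
          Touches (G.induce X) A B := by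
        intro i j A B hB hA
        obtain ⟨z, hz, hzadj⟩ := hadj' i j
        exact ⟨z, hA hz, sv i, hB, hzadj.symm⟩
      intro n m hn hm hnm
      by_cases hn1 : n = c
      · obtain ⟨i, hi⟩ := hFsv m hm (by omega)
        obtain ⟨j, hj⟩ := hFcs n hn (by omega)
        exact aux' i j (F n) (F m) hi hj
      · by_cases hm1 : m = c - 1
        · obtain ⟨i, hi⟩ := hFsv m hm (by omega)
          obtain ⟨j, hj⟩ := hFcs n hn (by omega)
          exact aux' i j (F n) (F m) hi hj
        · obtain ⟨i, hi⟩ := hFsv n hn hn1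
          obtain ⟨j, hj⟩ := hFcs m hm hm1
          exact aux i j (F n) (F m) hi hj
    set Tn : ℕ → Set ιT := fun n => {t | ∃ v ∈ F n, v ∈ bag t} with hTn
    obtain ⟨t, ht⟩ := helly hTree (Finset.range (c + 1)) Tn
      (fun n _ => pathClosed_of_connected hTree.2
        (td_subtree (G.induce X) T bag hcover hedge hvert (hFconn n)))
      (fun n hn m hm => by
        by_cases hnm : n = m
        · subst hnm
          obtain ⟨v, hv⟩ := hFne n
          obtain ⟨i, hi⟩ := hcover v
          exact ⟨i, ⟨v, hv, hi⟩, ⟨v, hv, hi⟩⟩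
        · rw [Finset.mem_range] at hn hm
          obtain ⟨x, hx, y, hy, hxy⟩ := hFtouch n m (by omega) (by omega) hnm
          obtain ⟨i, hxi, hyi⟩ := hedge hxy
          exact ⟨i, ⟨x, hx, hxi⟩, ⟨y, hy, hyi⟩⟩)
    have hv : ∀ n ∈ Finset.range (c + 1), ∃ x : ↥X, x ∈ F n ∧ x ∈ bag t := by
      intro n hn
      obtain ⟨x, hx1, hx2⟩ := ht n hn
      exact ⟨x, hx1, hx2⟩
    choose! v hv1 hv2 using hv
    have hinj : Set.InjOn v ↑(Finset.range (c + 1)) := by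
      intro n hn m hm hvnm
      by_contra hnm
      rw [Finset.coe_range, Set.mem_Iio] at hn hm
      exact Set.disjoint_left.mp
        (hFdisj n m (by omega) (by omega) hnm)
        (hv1 n (Finset.mem_range.mpr hn)) (hvnm ▸ hv1 m (Finset.mem_range.mpr hm))
    have hsubbag : ↑((Finset.range (c + 1)).image v) ⊆ bag t := by
      intro x hx
      rw [Finset.coe_image] at hx
      obtain ⟨n, hn, rfl⟩ := hx
      exact hv2 n (by simpa using hn)
    have hle := Set.ncard_le_ncard hsubbag (hbags t).1
    rw [Set.ncard_coe_finset, Finset.card_image_of_injOn hinj, Finset.card_range] at hle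
    have := (hbags t).2
    omega
end
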